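/- Let H be a complex Hilbert space and let (η_k)_{k∈ℕ} be a sequence of unit vectors in H that converges weakly to 0, i.e., ⟨η_k, ζ⟩ → 0 as k → ∞ for every ζ ∈ H. Then for every natural number I there exist indices k₀ < k₁ < … < k_I such that for every vector ξ ∈ H one has ∑_{i=0}^{I} |⟨ξ, η_{k_i}⟩|² ≤ 2‖ξ‖². -/

import Mathlib

open Filter


open scoped ComplexInnerProductSpace

lemma extract_pairwise {P : ℕ → ℕ → Prop}
    (h : ∀ j, ∀ᶠ m in atTop, P j m) :
    ∃ k : ℕ → ℕ, StrictMono k ∧ ∀ i j, i < j → P (k i) (k j) := by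
  have key : ∀ (b : ℕ) (s : Finset ℕ), ∃ m, b < m ∧ ∀ j ∈ s, P j m := by
    intro b s
    have h1 : ∀ᶠ m in atTop, ∀ j ∈ s, P j m := by
      rw [eventually_all_finset]; intro j _; exact h j
    have h2 : ∀ᶠ m in atTop, b < m := eventually_gt_atTop b
    exact (h2.and h1).exists
  let g : ℕ → ℕ × Finset ℕ := fun n => Nat.rec (0, {0})
    (fun _ p => ((key p.1 p.2).choose, insert (key p.1 p.2).choose p.2)) n
  have hg_succ : ∀ n, g (n+1) =
      ((key (g n).1 (g n).2).choose, insert (key (g n).1 (g n).2).choose (g n).2) :=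
    fun n => rfl
  have hmem : ∀ n, (g n).1 ∈ (g n).2 := by
    intro n; cases n with
    | zero => simp [g]
    | succ n => rw [hg_succ]; exact Finset.mem_insert_self _ _
  have hlt : ∀ n, (g n).1 < (g (n+1)).1 := by
    intro n; rw [hg_succ]; exact (key (g n).1 (g n).2).choose_spec.1
  have hP : ∀ n, ∀ j ∈ (g n).2, P j (g (n+1)).1 := by
    intro n j hj; rw [hg_succ]; exact (key (g n).1 (g n).2).choose_spec.2 j hj
  have hsub : ∀ m n, m ≤ n → (g m).2 ⊆ (g n).2 := by
    intro m n hmn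
    induction n with
    | zero => simp_all
    | succ n ih =>
      rcases Nat.le_succ_iff.mp hmn |>.symm with h' | h'
      · subst h'; rfl
      · exact (ih h').trans (by rw [hg_succ]; exact Finset.subset_insert _ _)
  refine ⟨fun n => (g n).1, strictMono_nat_of_lt_succ hlt, ?_⟩
  intro i j hij
  obtain ⟨n, rfl⟩ : ∃ n, j = n + 1 := ⟨j - 1, by omega⟩
  exact hP n _ (hsub i n (Nat.lt_succ_iff.mp hij) (hmem i))

/-- From a weakly null sequence of unit vectors in a complex Hilbert space one
can extract, for every `I`, indices `k₀ < k₁ < … < k_I` such that for every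
vector `ξ`, `∑_{i=0}^I |⟨ξ, η_{k_i}⟩|² ≤ 2‖ξ‖²`. -/
theorem stmt_3 {H : Type*} [NormedAddCommGroup H] [InnerProductSpace ℂ H]
    [CompleteSpace H] (η : ℕ → H)
    (hunit : ∀ k, ‖η k‖ = 1)
    (hweak : ∀ ζ : H, Filter.Tendsto (fun k => ⟪η k, ζ⟫) Filter.atTop (nhds 0)) :
    ∀ I : ℕ, ∃ k : Fin (I + 1) → ℕ, StrictMono k ∧
      ∀ ξ : H, ∑ i : Fin (I + 1), ‖⟪ξ, η (k i)⟫‖ ^ 2 ≤ 2 * ‖ξ‖ ^ 2 := by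
  intro I
  set δ : ℝ := 1 / (I + 1) with hδdef
  have hδpos : 0 < δ := by positivity
  have hδmul : δ * (I + 1) = 1 := by
    rw [hδdef]; field_simp
  obtain ⟨k', hk'mono, hk'P⟩ := extract_pairwise
    (P := fun j m => ‖⟪η j, η m⟫‖ ≤ δ)
    (by
      intro j
      have h1 : Tendsto (fun m => ‖⟪η m, η j⟫‖) atTop (nhds 0) := by
        simpa using (hweak (η j)).norm
      have h2 : ∀ᶠ m in atTop, ‖⟪η m, η j⟫‖ ≤ δ :=
        h1.eventually (eventually_le_nhds hδpos)
      filter_upwards [h2] with m hm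
      rwa [norm_inner_symm])
  refine ⟨fun i => k' i, fun i j hij => hk'mono hij, ?_⟩
  intro ξ
  set c : Fin (I + 1) → ℂ := fun i => ⟪ξ, η (k' i)⟫ with hc
  set S : ℝ := ∑ i : Fin (I + 1), ‖c i‖ ^ 2 with hS
  have hSnn : 0 ≤ S := Finset.sum_nonneg fun i _ => by positivity
  set w : H := ∑ i : Fin (I + 1), (starRingEnd ℂ) (c i) • η (k' i) with hw
  -- Step A : ⟪ξ, w⟫ = S
  have hA : ⟪ξ, w⟫ = (S : ℂ) := by
    rw [hw, inner_sum, hS]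
    push_cast
    refine Finset.sum_congr rfl fun i _ => ?_
    rw [inner_smul_right]
    have : inner ℂ ξ (η (k' ↑i)) = c i := rfl
    rw [this, mul_comm, Complex.mul_conj, Complex.normSq_eq_norm_sq]
    push_cast
    rfl
  have hCS : S ≤ ‖ξ‖ * ‖w‖ := by
    calc S = ‖⟪ξ, w⟫‖ := by rw [hA]; simp [abs_of_nonneg hSnn]
    _ ≤ ‖ξ‖ * ‖w‖ := norm_inner_le_norm ξ w
  -- Step B : ‖w‖^2 ≤ 2 * S
  have hB : ‖w‖ ^ 2 ≤ 2 * S := by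
    have hww : (‖w‖ ^ 2 : ℝ) = RCLike.re ⟪w, w⟫ := by
      rw [← inner_self_eq_norm_sq (𝕜 := ℂ) w]
    have hre : RCLike.re ⟪w, w⟫ ≤ ‖⟪w, w⟫‖ := RCLike.re_le_norm _
    have hexp : ‖⟪w, w⟫‖ ≤
        ∑ i : Fin (I+1), ∑ j : Fin (I+1), ‖c i‖ * ‖c j‖ * ‖⟪η (k' i), η (k' j)⟫‖ := by
      rw [hw, sum_inner]
      refine (norm_sum_le _ _).trans (Finset.sum_le_sum fun i _ => ?_)
      rw [inner_sum]
      refine (norm_sum_le _ _).trans (Finset.sum_le_sum fun j _ => ?_)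
      rw [inner_smul_left, inner_smul_right]
      simp [norm_mul, mul_assoc]
    have hdiag : ∀ i : Fin (I+1), ‖⟪η (k' i), η (k' i)⟫‖ = 1 := by
      intro i
      rw [inner_self_eq_norm_sq_to_K]
      simp [hunit]
    have hoff : ∀ i j : Fin (I+1), i ≠ j → ‖⟪η (k' i), η (k' j)⟫‖ ≤ δ := by
      intro i j hij
      rcases lt_or_gt_of_ne hij with h | h
      · exact hk'P _ _ h
      · rw [norm_inner_symm]; exact hk'P _ _ h

    have hbound : ∑ i : Fin (I+1), ∑ j : Fin (I+1),
        ‖c i‖ * ‖c j‖ * ‖⟪η (k' i), η (k' j)⟫‖ ≤ S + δ * ((I+1) * S) := by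
      have hsplit : ∀ i : Fin (I+1), ∑ j : Fin (I+1),
          ‖c i‖ * ‖c j‖ * ‖⟪η (k' i), η (k' j)⟫‖ ≤
          ‖c i‖ ^ 2 + ∑ j : Fin (I+1), δ * (‖c i‖ * ‖c j‖) := by
        intro i
        rw [← Finset.sum_erase_add _ _ (Finset.mem_univ i), hdiag i]
        have : ∑ j ∈ Finset.univ.erase i,
            ‖c i‖ * ‖c j‖ * ‖⟪η (k' i), η (k' j)⟫‖ ≤
            ∑ j ∈ Finset.univ.erase i, δ * (‖c i‖ * ‖c j‖) := by
          refine Finset.sum_le_sum fun j hj => ?_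
          have hne : i ≠ j := (Finset.ne_of_mem_erase hj).symm
          rw [mul_comm (δ)]
          exact mul_le_mul_of_nonneg_left (hoff i j hne) (by positivity)
        have hsub : ∑ j ∈ Finset.univ.erase i, δ * (‖c i‖ * ‖c j‖) ≤
            ∑ j : Fin (I+1), δ * (‖c i‖ * ‖c j‖) :=
          Finset.sum_le_sum_of_subset_of_nonneg (Finset.erase_subset _ _)
            (fun j _ _ => by positivity)
        calc _ ≤ (∑ j ∈ Finset.univ.erase i, δ * (‖c i‖ * ‖c j‖)) + ‖c i‖ * ‖c i‖ * 1 :=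
              add_le_add_left this _
          _ ≤ _ := by
              rw [mul_one, ← sq, add_comm]
              exact add_le_add_right hsub _
      calc ∑ i : Fin (I+1), ∑ j : Fin (I+1),
          ‖c i‖ * ‖c j‖ * ‖⟪η (k' i), η (k' j)⟫‖
          ≤ ∑ i : Fin (I+1), (‖c i‖ ^ 2 + ∑ j : Fin (I+1), δ * (‖c i‖ * ‖c j‖)) :=
            Finset.sum_le_sum fun i _ => hsplit i
        _ = S + δ * (∑ i : Fin (I+1), ‖c i‖) ^ 2 := by
            rw [Finset.sum_add_distrib, hS, sq (∑ i : Fin (I+1), ‖c i‖),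
              Finset.sum_mul_sum]
            congr 1
            rw [Finset.mul_sum]
            refine Finset.sum_congr rfl fun i _ => ?_
            rw [Finset.mul_sum]
        _ ≤ S + δ * ((I+1) * S) := by
            refine add_le_add_right (mul_le_mul_of_nonneg_left ?_ hδpos.le) _
            have := sq_sum_le_card_mul_sum_sq
              (s := (Finset.univ : Finset (Fin (I+1)))) (f := fun i => ‖c i‖)
            simpa [hS] using this
    calc ‖w‖ ^ 2 = Complex.re ⟪w, w⟫ := hww
      _ ≤ ‖⟪w, w⟫‖ := hre
      _ ≤ _ := hexp
      _ ≤ S + δ * ((I+1) * S) := hbound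
      _ = 2 * S := by rw [← mul_assoc, hδmul]; ring
  -- conclude
  nlinarith [sq_nonneg (‖ξ‖ - ‖w‖), norm_nonneg ξ, norm_nonneg w, hCS, hB, hSnn,
    mul_le_mul hCS hCS hSnn (by positivity : (0:ℝ) ≤ ‖ξ‖ * ‖w‖)]
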